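/- Let F ∈ C^∞(ℝ, ℝ) and define, for f ∈ C_c^∞(ℝ), A_F f = -i(F f' + ½ F' f), and let T = p F'(q) p, i.e. T f = -(F' f')'. Then for every f ∈ C_c^∞(ℝ), the commutator [T, iA_F]f := i(T(A_F f) - A_F(T f)) satisfies [T, iA_F] f = -((2F'² - F F'') f')' - ½ (F''' F' + (F'')²) f; that is, [pF'(q)p, iA_F] = p(2F'(q)² - F(q)F''(q))p - ½(F'''(q)F'(q) + F''(q)²) on C_c^∞(ℝ). -/

import Mathlib

open MeasureTheory Complex Real

noncomputable section

/-- `A_F f = -i(F f' + ½F' f)`, i.e. `A_F = ½(pF(q) + F(q)p)` with `p = -i d/dx`. -/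
def AF1 (F : ℝ → ℝ) (f : ℝ → ℂ) (x : ℝ) : ℂ :=
  -Complex.I * ((F x : ℂ) * deriv f x + (1 / 2 : ℂ) * ((deriv F x : ℝ) : ℂ) * f x)

/-- `T = pF'(q)p`, i.e. `T f = -(F' f')'`. -/
def Tpfp (F : ℝ → ℝ) (f : ℝ → ℂ) (x : ℝ) : ℂ :=
  -deriv (fun y => ((deriv F y : ℝ) : ℂ) * deriv f y) x

/-- for `F ∈ C^∞(ℝ,ℝ)` and `f ∈ C_c^∞(ℝ)`, the iterated commutator
`[pF'(q)p, iA_F]f = i(T(A_F f) - A_F(Tf))` equals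
`-((2F'² - FF'')f')' - ½(F'''F' + (F'')²)f`, i.e.
`[pF'(q)p, iA_F] = p(2F'(q)² - F(q)F''(q))p - ½(F'''(q)F'(q) + F''(q)²)` on `C_c^∞(ℝ)`. -/
theorem statement17 (F : ℝ → ℝ) (hF : ContDiff ℝ (⊤ : ℕ∞) F)
    (f : ℝ → ℂ) (hf : ContDiff ℝ (⊤ : ℕ∞) f) (hsupp : HasCompactSupport f) (x : ℝ) :
    Complex.I * (Tpfp F (AF1 F f) x - AF1 F (Tpfp F f) x) =
      -deriv (fun y =>
          ((2 * (deriv F y) ^ 2 - F y * deriv (deriv F) y : ℝ) : ℂ) * deriv f y) x -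
        (1 / 2 : ℂ) *
          ((deriv (deriv (deriv F)) x * deriv F x + (deriv (deriv F) x) ^ 2 : ℝ) : ℂ) *
          f x := by
  have hF1 : ContDiff ℝ (⊤ : ℕ∞) (deriv F) := (contDiff_infty_iff_deriv.mp hF).2
  have hF2 : ContDiff ℝ (⊤ : ℕ∞) (deriv (deriv F)) := (contDiff_infty_iff_deriv.mp hF1).2
  have hf1 : ContDiff ℝ (⊤ : ℕ∞) (deriv f) := (contDiff_infty_iff_deriv.mp hf).2
  have hf2 : ContDiff ℝ (⊤ : ℕ∞) (deriv (deriv f)) := (contDiff_infty_iff_deriv.mp hf1).2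
  have one_le : ((⊤ : ℕ∞) : WithTop ℕ∞) ≠ 0 := by simp
  have hFd : Differentiable ℝ F := hF.differentiable one_le
  have hF1d : Differentiable ℝ (deriv F) := hF1.differentiable one_le
  have hF2d : Differentiable ℝ (deriv (deriv F)) := hF2.differentiable one_le
  have hfd : Differentiable ℝ f := hf.differentiable one_le
  have hf1d : Differentiable ℝ (deriv f) := hf1.differentiable one_le
  have hf2d : Differentiable ℝ (deriv (deriv f)) := hf2.differentiable one_le
  -- derivative of A_F f
  have hA : ∀ y, HasDerivAt (AF1 F f)
      (-Complex.I * ((((deriv F y : ℝ) : ℂ) * deriv f y + ((F y : ℝ) : ℂ) * deriv (deriv f) y)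
        + ((1/2 : ℂ) * ((deriv (deriv F) y : ℝ) : ℂ) * f y
          + (1/2 : ℂ) * ((deriv F y : ℝ) : ℂ) * deriv f y))) y := by
    intro y
    have h1 : HasDerivAt (fun t => ((F t : ℝ) : ℂ) * deriv f t)
        (((deriv F y : ℝ) : ℂ) * deriv f y + ((F y : ℝ) : ℂ) * deriv (deriv f) y) y :=
      ((hFd y).hasDerivAt.ofReal_comp).mul (hf1d y).hasDerivAt
    have h2 : HasDerivAt (fun t => (1/2 : ℂ) * ((deriv F t : ℝ) : ℂ) * f t)
        ((1/2 : ℂ) * ((deriv (deriv F) y : ℝ) : ℂ) * f y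
          + (1/2 : ℂ) * ((deriv F y : ℝ) : ℂ) * deriv f y) y := by
      have := (((hF1d y).hasDerivAt.ofReal_comp).const_mul (1/2 : ℂ)).mul (hfd y).hasDerivAt
      exact this.congr_deriv (by ring)
    exact (h1.add h2).const_mul (-Complex.I)
  have hfunA : (fun y => ((deriv F y : ℝ) : ℂ) * deriv (AF1 F f) y)
      = (fun y => ((deriv F y : ℝ) : ℂ) *
          (-Complex.I * ((((deriv F y : ℝ) : ℂ) * deriv f y + ((F y : ℝ) : ℂ) * deriv (deriv f) y)
            + ((1/2 : ℂ) * ((deriv (deriv F) y : ℝ) : ℂ) * f y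
              + (1/2 : ℂ) * ((deriv F y : ℝ) : ℂ) * deriv f y)))) :=
    funext fun y => by rw [(hA y).deriv]
  -- derivative of the inner sum S at x
  have hS1 : HasDerivAt (fun t => ((deriv F t : ℝ) : ℂ) * deriv f t)
      (((deriv (deriv F) x : ℝ) : ℂ) * deriv f x
        + ((deriv F x : ℝ) : ℂ) * deriv (deriv f) x) x :=
    ((hF1d x).hasDerivAt.ofReal_comp).mul (hf1d x).hasDerivAt
  have hS2 : HasDerivAt (fun t => ((F t : ℝ) : ℂ) * deriv (deriv f) t)
      (((deriv F x : ℝ) : ℂ) * deriv (deriv f) x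
        + ((F x : ℝ) : ℂ) * deriv (deriv (deriv f)) x) x :=
    ((hFd x).hasDerivAt.ofReal_comp).mul (hf2d x).hasDerivAt
  have hS3 : HasDerivAt (fun t => (1/2 : ℂ) * ((deriv (deriv F) t : ℝ) : ℂ) * f t)
      ((1/2 : ℂ) * ((deriv (deriv (deriv F)) x : ℝ) : ℂ) * f x
        + (1/2 : ℂ) * ((deriv (deriv F) x : ℝ) : ℂ) * deriv f x) x := by
    have := (((hF2d x).hasDerivAt.ofReal_comp).const_mul (1/2 : ℂ)).mul (hfd x).hasDerivAt
    exact this.congr_deriv (by ring)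
  have hS4 : HasDerivAt (fun t => (1/2 : ℂ) * ((deriv F t : ℝ) : ℂ) * deriv f t)
      ((1/2 : ℂ) * ((deriv (deriv F) x : ℝ) : ℂ) * deriv f x
        + (1/2 : ℂ) * ((deriv F x : ℝ) : ℂ) * deriv (deriv f) x) x := by
    have := (((hF1d x).hasDerivAt.ofReal_comp).const_mul (1/2 : ℂ)).mul (hf1d x).hasDerivAt
    exact this.congr_deriv (by ring)
  have hS := (hS1.add hS2).add (hS3.add hS4)
  have hg := ((hF1d x).hasDerivAt.ofReal_comp).mul (hS.const_mul (-Complex.I))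
  have e1 : Tpfp F (AF1 F f) x =
      -(((deriv (deriv F) x : ℝ) : ℂ) *
          (-Complex.I * ((((deriv F x : ℝ) : ℂ) * deriv f x + ((F x : ℝ) : ℂ) * deriv (deriv f) x)
            + ((1/2 : ℂ) * ((deriv (deriv F) x : ℝ) : ℂ) * f x
              + (1/2 : ℂ) * ((deriv F x : ℝ) : ℂ) * deriv f x)))
        + ((deriv F x : ℝ) : ℂ) * (-Complex.I *
          (((((deriv (deriv F) x : ℝ) : ℂ) * deriv f x + ((deriv F x : ℝ) : ℂ) * deriv (deriv f) x)
            + (((deriv F x : ℝ) : ℂ) * deriv (deriv f) x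
              + ((F x : ℝ) : ℂ) * deriv (deriv (deriv f)) x))
            + (((1/2 : ℂ) * ((deriv (deriv (deriv F)) x : ℝ) : ℂ) * f x
                + (1/2 : ℂ) * ((deriv (deriv F) x : ℝ) : ℂ) * deriv f x)
              + ((1/2 : ℂ) * ((deriv (deriv F) x : ℝ) : ℂ) * deriv f x
                + (1/2 : ℂ) * ((deriv F x : ℝ) : ℂ) * deriv (deriv f) x))))) := by
    show -deriv (fun y => ((deriv F y : ℝ) : ℂ) * deriv (AF1 F f) y) x = _
    rw [hfunA]; exact congrArg Neg.neg hg.deriv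
  -- T f as a function
  have hT1 : ∀ y, HasDerivAt (fun t => ((deriv F t : ℝ) : ℂ) * deriv f t)
      (((deriv (deriv F) y : ℝ) : ℂ) * deriv f y
        + ((deriv F y : ℝ) : ℂ) * deriv (deriv f) y) y :=
    fun y => ((hF1d y).hasDerivAt.ofReal_comp).mul (hf1d y).hasDerivAt
  have hTfun : Tpfp F f = fun y =>
      -(((deriv (deriv F) y : ℝ) : ℂ) * deriv f y
        + ((deriv F y : ℝ) : ℂ) * deriv (deriv f) y) :=
    funext fun y => by simp only [Tpfp]; rw [(hT1 y).deriv]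
  have hDT : HasDerivAt (fun y =>
      -(((deriv (deriv F) y : ℝ) : ℂ) * deriv f y
        + ((deriv F y : ℝ) : ℂ) * deriv (deriv f) y))
      (-((((deriv (deriv (deriv F)) x : ℝ) : ℂ) * deriv f x
          + ((deriv (deriv F) x : ℝ) : ℂ) * deriv (deriv f) x)
        + (((deriv (deriv F) x : ℝ) : ℂ) * deriv (deriv f) x
          + ((deriv F x : ℝ) : ℂ) * deriv (deriv (deriv f)) x))) x :=
    ((((hF2d x).hasDerivAt.ofReal_comp).mul (hf1d x).hasDerivAt).add
      (((hF1d x).hasDerivAt.ofReal_comp).mul (hf2d x).hasDerivAt)).neg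
  have e2 : AF1 F (Tpfp F f) x =
      -Complex.I * (((F x : ℝ) : ℂ) *
          (-((((deriv (deriv (deriv F)) x : ℝ) : ℂ) * deriv f x
              + ((deriv (deriv F) x : ℝ) : ℂ) * deriv (deriv f) x)
            + (((deriv (deriv F) x : ℝ) : ℂ) * deriv (deriv f) x
              + ((deriv F x : ℝ) : ℂ) * deriv (deriv (deriv f)) x)))
        + (1/2 : ℂ) * ((deriv F x : ℝ) : ℂ) *
          (-(((deriv (deriv F) x : ℝ) : ℂ) * deriv f x
            + ((deriv F x : ℝ) : ℂ) * deriv (deriv f) x))) := by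
    simp only [AF1, hTfun, hDT.deriv]
  -- RHS derivative
  have hG : HasDerivAt (fun y => 2 * (deriv F y) ^ 2 - F y * deriv (deriv F) y)
      (2 * (↑2 * deriv F x ^ (2 - 1) * deriv (deriv F) x)
        - (deriv F x * deriv (deriv F) x + F x * deriv (deriv (deriv F)) x)) x :=
    (((hF1d x).hasDerivAt.pow 2).const_mul (2 : ℝ)).sub
      ((hFd x).hasDerivAt.mul (hF2d x).hasDerivAt)
  have hR := (hG.ofReal_comp).mul (hf1d x).hasDerivAt
  rw [e1, e2, show deriv (fun y => ((2 * (deriv F y) ^ 2 - F y * deriv (deriv F) y : ℝ) : ℂ) * deriv f y) x = _ from hR.deriv]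
  push_cast
  ring_nf
  simp only [Complex.I_sq]
  ring
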